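/- arXiv:2310.15754 — 2 statements merged into one kernel-verified Lean document; each statement's English description precedes it below -/
import Mathlib

section
/- Let G be a graph, and let C₁, C₂, C₃ be connected induced subgraphs of G with pairwise distance at least two in G. Let k be the minimum of lmw(C₁), lmw(C₂), lmw(C₃). If for each pair of subgraphs Cᵢ, Cⱼ (with third subgraph C_l) there exists a path P_{i,j} in G running from Cᵢ to Cⱼ that does not intersect the closed neighborhood N[C_l] of the third subgraph, then lmw(G) ≥ k+1. -/
open scoped Classical

noncomputable section

namespace LMW

variable {V : Type*} [Fintype V]

/-- The bipartite graph `G[Vᵢ, V̄ᵢ]` consisting of the edges of `G` crossing the cut at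
position `i` of the linear layout `σ` (here `Vᵢ` is the set of the first `i` vertices
in the layout). -/
def cutGraph (G : SimpleGraph V) (σ : V ≃ Fin (Fintype.card V)) (i : ℕ) : SimpleGraph V where
  Adj u v := G.Adj u v ∧
    (((σ u : ℕ) < i ∧ i ≤ (σ v : ℕ)) ∨ ((σ v : ℕ) < i ∧ i ≤ (σ u : ℕ)))
  symm := by
    constructor
    intro u v h
    exact ⟨h.1.symm, h.2.symm⟩
  loopless := by
    constructor
    intro u h
    exact G.irrefl h.1

/-- `M` is an induced matching in `H`: a set of edges of `H` such that any two distinct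
edges of `M` share no endpoint and no endpoint of one is adjacent in `H` to an endpoint
of the other. -/
def IsInducedMatching (H : SimpleGraph V) (M : Finset (Sym2 V)) : Prop :=
  (↑M : Set (Sym2 V)) ⊆ H.edgeSet ∧
    ∀ e ∈ M, ∀ f ∈ M, e ≠ f → ∀ u ∈ e, ∀ v ∈ f, u ≠ v ∧ ¬ H.Adj u v

/-- `mim H` is the size of a maximum induced matching of `H`. -/
def mim (H : SimpleGraph V) : ℕ :=
  sSup {n : ℕ | ∃ M : Finset (Sym2 V), IsInducedMatching H M ∧ M.card = n}

/-- The MIM-width of `G` under the linear layout `σ`: the maximum over all cuts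
`1 ≤ i < |V|` of the size of a maximum induced matching of the cut graph. -/
def mw (G : SimpleGraph V) (σ : V ≃ Fin (Fintype.card V)) : ℕ :=
  (Finset.Ico 1 (Fintype.card V)).sup fun i => mim (cutGraph G σ i)

/-- The linear MIM-width of `G`: the minimum of `mw G σ` over all linear layouts `σ`. -/
def lmw (G : SimpleGraph V) : ℕ :=
  sInf {m : ℕ | ∃ σ : V ≃ Fin (Fintype.card V), mw G σ = m}

/-- The closed neighborhood `N[s]` of a set of vertices: `s` together with all vertices
adjacent to some vertex of `s`. -/
def closedNbhd (G : SimpleGraph V) (s : Set V) : Set V :=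
  s ∪ {v | ∃ u ∈ s, G.Adj u v}

/-! ### Auxiliary lemmas -/


lemma mim_bddAbove (H : SimpleGraph V) :
    BddAbove {n : ℕ | ∃ M : Finset (Sym2 V), IsInducedMatching H M ∧ M.card = n} := by
  refine ⟨Fintype.card (Sym2 V), ?_⟩
  rintro n ⟨M, -, rfl⟩
  exact Finset.card_le_univ M

lemma le_mim {H : SimpleGraph V} {M : Finset (Sym2 V)} (h : IsInducedMatching H M) :
    M.card ≤ mim H :=
  le_csSup (mim_bddAbove H) ⟨M, h, rfl⟩

lemma empty_isInducedMatching (H : SimpleGraph V) : IsInducedMatching H ∅ := by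
  constructor
  · simp
  · intro e he; simp at he

lemma exists_mim_matching (H : SimpleGraph V) :
    ∃ M : Finset (Sym2 V), IsInducedMatching H M ∧ M.card = mim H := by
  have h := Nat.sSup_mem (s := {n : ℕ | ∃ M : Finset (Sym2 V), IsInducedMatching H M ∧ M.card = n})
    ⟨0, ∅, empty_isInducedMatching H, by simp⟩ (mim_bddAbove H)
  exact h

lemma mim_le_mw {G : SimpleGraph V} {σ : V ≃ Fin (Fintype.card V)} {i : ℕ}
    (h1 : 1 ≤ i) (h2 : i < Fintype.card V) : mim (cutGraph G σ i) ≤ mw G σ := by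
  have hi : i ∈ Finset.Ico 1 (Fintype.card V) := by simp only [Finset.mem_Ico]; omega
  exact Finset.le_sup (f := fun j => mim (cutGraph G σ j)) hi

lemma le_lmw {G : SimpleGraph V} {k : ℕ} (h : ∀ σ : V ≃ Fin (Fintype.card V), k ≤ mw G σ) :
    k ≤ lmw G := by
  refine le_csInf ⟨mw G (Fintype.equivFin V), Fintype.equivFin V, rfl⟩ ?_
  rintro m ⟨σ, rfl⟩
  exact h σ

lemma lmw_le (G : SimpleGraph V) (σ : V ≃ Fin (Fintype.card V)) : lmw G ≤ mw G σ :=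
  Nat.sInf_le ⟨σ, rfl⟩

lemma exists_cross_edge {G : SimpleGraph V} (σ : V ≃ Fin (Fintype.card V)) (i : ℕ)
    {x y : V} (w : G.Walk x y) :
    (σ x : ℕ) < i → i ≤ (σ y : ℕ) →
    ∃ u v, G.Adj u v ∧ u ∈ w.support ∧ v ∈ w.support ∧ (σ u : ℕ) < i ∧ i ≤ (σ v : ℕ) := by
  induction w with
  | nil => intro hx hy; omega
  | @cons a b c h p ih =>
    intro hx hy
    by_cases hb : i ≤ (σ b : ℕ)
    · exact ⟨a, b, h, SimpleGraph.Walk.start_mem_support _,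
        by simp [SimpleGraph.Walk.support_cons, p.start_mem_support], hx, hb⟩
    · obtain ⟨u, v, huv, hu, hv, h1, h2⟩ := ih (by omega) hy
      exact ⟨u, v, huv, by simp [SimpleGraph.Walk.support_cons, hu],
        by simp [SimpleGraph.Walk.support_cons, hv], h1, h2⟩

lemma not_mem_closedNbhd {G : SimpleGraph V} {A B : Set V}
    (hd : ∀ u ∈ A, ∀ v ∈ B, 2 ≤ G.edist u v) {u : V} (hu : u ∈ A) :
    u ∉ closedNbhd G B := by
  rintro (hB | ⟨b, hb, hadj⟩)
  · have h := hd u hu u hB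
    rw [SimpleGraph.edist_self] at h
    norm_num at h
  · have h2 := hd u hu b hb
    rw [SimpleGraph.edist_comm, SimpleGraph.edist_eq_one_iff_adj.mpr hadj] at h2
    norm_num at h2

lemma exists_walk_in_set {G : SimpleGraph V} {s : Set V} (hs : (G.induce s).Connected)
    {a b : V} (ha : a ∈ s) (hb : b ∈ s) :
    ∃ w : G.Walk a b, ∀ x ∈ w.support, x ∈ s := by
  obtain ⟨w⟩ := hs.preconnected ⟨a, ha⟩ ⟨b, hb⟩
  refine ⟨w.map (SimpleGraph.Embedding.induce s).toHom, ?_⟩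
  intro x hx
  have hx : x ∈ (w.map (SimpleGraph.Embedding.induce s).toHom).support := hx
  rw [SimpleGraph.Walk.support_map, List.mem_map] at hx
  obtain ⟨⟨y, hy⟩, -, rfl⟩ := hx
  exact hy

lemma walk_symm {G : SimpleGraph V} {A B C : Set V}
    (h : ∃ a ∈ A, ∃ b ∈ C, ∃ w : G.Walk a b, ∀ x ∈ w.support, x ∉ closedNbhd G B) :
    ∃ b ∈ C, ∃ a ∈ A, ∃ w : G.Walk b a, ∀ x ∈ w.support, x ∉ closedNbhd G B := by
  obtain ⟨a, ha, b, hb, w, hsup⟩ := h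
  exact ⟨b, hb, a, ha, w.reverse, fun x hx => hsup x (by
    rw [SimpleGraph.Walk.support_reverse, List.mem_reverse] at hx; exact hx)⟩

lemma extract {G : SimpleGraph V} (σ : V ≃ Fin (Fintype.card V)) (s : Set V) {k : ℕ}
    (hk1 : 1 ≤ k) (hks : k ≤ lmw (G.induce s)) :
    ∃ i : ℕ, 1 ≤ i ∧ i < Fintype.card V ∧
      (∃ a ∈ s, (σ a : ℕ) < i) ∧ (∃ b ∈ s, i ≤ (σ b : ℕ)) ∧
      ∃ M : Finset (Sym2 V), IsInducedMatching (cutGraph G σ i) M ∧ k ≤ M.card ∧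
        ∀ e ∈ M, ∀ u ∈ e, u ∈ s := by
  classical
  set F : Finset (Fin (Fintype.card V)) := (Set.toFinset s).image σ with hF
  have hFmem : ∀ y ∈ F, (σ.symm y : V) ∈ s := by
    intro y hy
    obtain ⟨x, hx, rfl⟩ := Finset.mem_image.mp hy
    simpa using Set.mem_toFinset.mp hx
  have hFcard : F.card = Fintype.card ↥s := by
    rw [hF, Finset.card_image_of_injective _ σ.injective, Set.toFinset_card]
  let e1 : ↥s ≃ ↥F :=
    { toFun := fun x => ⟨σ ↑x, Finset.mem_image_of_mem _ (Set.mem_toFinset.mpr x.2)⟩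
      invFun := fun y => ⟨σ.symm ↑y, hFmem _ y.2⟩
      left_inv := fun x => by simp
      right_inv := fun y => by simp }
  let ι := F.orderIsoOfFin hFcard
  let σs : ↥s ≃ Fin (Fintype.card ↥s) := e1.trans ι.symm.toEquiv
  -- the layout σs of the induced graph has some cut of mim ≥ k
  have hmw : k ≤ mw (G.induce s) σs := le_trans hks (lmw_le _ σs)
  rw [mw] at hmw
  rw [Finset.le_sup_iff (by simp only [Nat.bot_eq_zero]; omega : (⊥ : ℕ) < k)] at hmw
  obtain ⟨t, htIco, htk⟩ := hmw
  rw [Finset.mem_Ico] at htIco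
  obtain ⟨ht1, htm⟩ := htIco
  set tFin : Fin (Fintype.card ↥s) := ⟨t, htm⟩ with htFin
  set i : ℕ := ((ι tFin : Fin (Fintype.card V)) : ℕ) with hi
  -- the key correspondence between the two cuts
  have key : ∀ x : ↥s, ((σs x : ℕ) < t ↔ (σ ↑x : ℕ) < i) := by
    intro x
    have h1 : σs x < tFin ↔ e1 x < ι tFin := by
      rw [show σs x = ι.symm (e1 x) from rfl, ← ι.lt_iff_lt, OrderIso.apply_symm_apply]
    have h2 : (e1 x < ι tFin) ↔ ((e1 x : Fin (Fintype.card V)) < (ι tFin : Fin (Fintype.card V))) :=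
      Iff.symm Subtype.coe_lt_coe
    constructor
    · intro h
      have := (h1.mp (by exact Fin.mk_lt_mk.mpr h))
      have := h2.mp this
      exact Fin.lt_def.mp this
    · intro h
      have := h1.mpr (h2.mpr (Fin.lt_def.mpr h))
      simpa [htFin, Fin.lt_def] using this
  have key' : ∀ x : ↥s, (t ≤ (σs x : ℕ) ↔ i ≤ (σ ↑x : ℕ)) := by
    intro x
    rw [← not_lt, ← not_lt]
    exact not_congr (key x)
  refine ⟨i, ?_, (ι tFin : Fin (Fintype.card V)).is_lt, ?_, ?_, ?_⟩
  · -- 1 ≤ i : the vertex of rank 0 is to the left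
    have h0 : (σs (σs.symm ⟨0, by omega⟩) : ℕ) < t := by simp; omega
    have := (key _).mp h0
    omega
  · refine ⟨↑(σs.symm ⟨0, by omega⟩), (σs.symm ⟨0, by omega⟩).2, ?_⟩
    exact (key _).mp (by simp; omega)
  · refine ⟨↑(σs.symm tFin), (σs.symm tFin).2, ?_⟩
    refine (key' _).mp ?_
    simp [htFin]
  · -- transfer a maximum induced matching
    obtain ⟨M', hM', hM'card⟩ := exists_mim_matching (cutGraph (G.induce s) σs t)
    have hM'k : k ≤ M'.card := by omega
    -- adjacency correspondence
    have adj_iff : ∀ x y : ↥s,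
        (cutGraph (G.induce s) σs t).Adj x y ↔ (cutGraph G σ i).Adj ↑x ↑y := by
      intro x y
      constructor
      · rintro ⟨hadj, hc⟩
        refine ⟨by simpa using hadj, ?_⟩
        rcases hc with ⟨p1, p2⟩ | ⟨p1, p2⟩
        · exact Or.inl ⟨(key x).mp p1, (key' y).mp p2⟩
        · exact Or.inr ⟨(key y).mp p1, (key' x).mp p2⟩
      · rintro ⟨hadj, hc⟩
        refine ⟨by simpa using hadj, ?_⟩
        rcases hc with ⟨p1, p2⟩ | ⟨p1, p2⟩
        · exact Or.inl ⟨(key x).mpr p1, (key' y).mpr p2⟩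
        · exact Or.inr ⟨(key y).mpr p1, (key' x).mpr p2⟩
    refine ⟨M'.image (Sym2.map (Subtype.val : ↥s → V)), ⟨?_, ?_⟩, ?_, ?_⟩
    · -- edges
      intro e he
      rw [Finset.mem_coe, Finset.mem_image] at he
      obtain ⟨e', he', rfl⟩ := he
      induction e' using Sym2.ind with
      | _ x y =>
        have h := hM'.1 (Finset.mem_coe.mpr he')
        rw [SimpleGraph.mem_edgeSet] at h
        rw [Sym2.map_pair_eq, SimpleGraph.mem_edgeSet]
        exact (adj_iff x y).mp h
    · -- induced matching condition
      intro e he f hf hef u hu v hv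
      rw [Finset.mem_image] at he hf
      obtain ⟨e', he', rfl⟩ := he
      obtain ⟨f', hf', rfl⟩ := hf
      have hef' : e' ≠ f' := fun h => hef (by rw [h])
      obtain ⟨u', hu', rfl⟩ := Sym2.mem_map.mp hu
      obtain ⟨v', hv', rfl⟩ := Sym2.mem_map.mp hv
      obtain ⟨hne, hnadj⟩ := hM'.2 e' he' f' hf' hef' u' hu' v' hv'
      refine ⟨fun h => hne (Subtype.ext h), fun h => hnadj ((adj_iff u' v').mpr h)⟩
    · -- cardinality
      rw [Finset.card_image_of_injective _ (Sym2.map.injective Subtype.val_injective)]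
      exact hM'k
    · -- endpoints in s
      intro e he u hu
      rw [Finset.mem_image] at he
      obtain ⟨e', he', rfl⟩ := he
      obtain ⟨u', hu', rfl⟩ := Sym2.mem_map.mp hu
      exact u'.2

lemma core {G : SimpleGraph V} (σ : V ≃ Fin (Fintype.card V)) {A B C : Set V} {i k : ℕ}
    (h1i : 1 ≤ i) (hin : i < Fintype.card V)
    {M : Finset (Sym2 V)} (hM : IsInducedMatching (cutGraph G σ i) M) (hMk : k ≤ M.card)
    (hMB : ∀ e ∈ M, ∀ u ∈ e, u ∈ B)
    (hA : (G.induce A).Connected) (hC : (G.induce C).Connected)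
    (hAB : ∀ u ∈ A, u ∉ closedNbhd G B) (hCB : ∀ u ∈ C, u ∉ closedNbhd G B)
    (ha : ∃ a ∈ A, (σ a : ℕ) < i) (hc : ∃ c ∈ C, i ≤ (σ c : ℕ))
    (hp : ∃ a' ∈ A, ∃ c' ∈ C, ∃ w : G.Walk a' c', ∀ x ∈ w.support, x ∉ closedNbhd G B) :
    k + 1 ≤ mw G σ := by
  obtain ⟨a, haA, hai⟩ := ha
  obtain ⟨c, hcC, hci⟩ := hc
  obtain ⟨a', ha'A, c', hc'C, w, hw⟩ := hp
  obtain ⟨wa, hwa⟩ := exists_walk_in_set hA haA ha'A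
  obtain ⟨wc, hwc⟩ := exists_walk_in_set hC hc'C hcC
  set W : G.Walk a c := wa.append (w.append wc) with hW
  have hWsup : ∀ x ∈ W.support, x ∉ closedNbhd G B := by
    intro x hx
    rw [hW, SimpleGraph.Walk.mem_support_append_iff] at hx
    rcases hx with hx | hx
    · exact hAB x (hwa x hx)
    · rw [SimpleGraph.Walk.mem_support_append_iff] at hx
      rcases hx with hx | hx
      · exact hw x hx
      · exact hCB x (hwc x hx)
  obtain ⟨u, v, huv, hu, hv, hui, hvi⟩ := exists_cross_edge σ i W hai hci
  have hu' : u ∉ closedNbhd G B := hWsup u hu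
  have hv' : v ∉ closedNbhd G B := hWsup v hv
  have hnotB : ∀ x, x ∈ s(u, v) → x ∉ closedNbhd G B := by
    intro x hx
    rcases Sym2.mem_iff.mp hx with rfl | rfl
    exacts [hu', hv']
  have hmem_e : s(u, v) ∉ M := by
    intro hmem
    exact hu' (Or.inl (hMB _ hmem u (Sym2.mem_mk_left u v)))
  have hcard : (insert s(u, v) M).card = M.card + 1 := Finset.card_insert_of_notMem hmem_e
  have hcut : ∀ {x y : V}, x ∈ s(u, v) → y ∈ B → x ≠ y ∧ ¬ (cutGraph G σ i).Adj x y := by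
    intro x y hx hy
    refine ⟨fun h => hnotB x hx (Or.inl (h ▸ hy)), fun h => hnotB x hx (Or.inr ⟨y, hy, h.1.symm⟩)⟩
  have hmatch : IsInducedMatching (cutGraph G σ i) (insert s(u, v) M) := by
    constructor
    · intro e he
      rw [Finset.coe_insert, Set.mem_insert_iff] at he
      rcases he with rfl | he
      · rw [SimpleGraph.mem_edgeSet]
        exact ⟨huv, Or.inl ⟨hui, hvi⟩⟩
      · exact hM.1 he
    · intro e he f hf hef x hx y hy
      rcases Finset.mem_insert.mp he with rfl | heM
      · rcases Finset.mem_insert.mp hf with rfl | hfM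
        · exact absurd rfl hef
        · exact hcut hx (hMB f hfM y hy)
      · rcases Finset.mem_insert.mp hf with rfl | hfM
        · obtain ⟨hne, hnadj⟩ := hcut hy (hMB e heM x hx)
          exact ⟨hne.symm, fun h => hnadj h.symm⟩
        · exact hM.2 e heM f hfM hef x hx y hy
  have h1 : k + 1 ≤ mim (cutGraph G σ i) := by
    have := le_mim hmatch
    omega
  exact le_trans h1 (mim_le_mw h1i hin)

lemma one_le_mw {G : SimpleGraph V} (σ : V ≃ Fin (Fintype.card V)) {a b : V}
    (w : G.Walk a b) (hab : (σ a : ℕ) < (σ b : ℕ)) : 1 ≤ mw G σ := by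
  set i : ℕ := (σ b : ℕ) with hi
  obtain ⟨u, v, huv, -, -, hui, hvi⟩ := exists_cross_edge σ i w hab le_rfl
  have hmatch : IsInducedMatching (cutGraph G σ i) {s(u, v)} := by
    constructor
    · intro e he
      rw [Finset.coe_singleton, Set.mem_singleton_iff] at he
      subst he
      rw [SimpleGraph.mem_edgeSet]
      exact ⟨huv, Or.inl ⟨hui, hvi⟩⟩
    · intro e he f hf hef
      rw [Finset.mem_singleton] at he hf
      subst he; subst hf
      exact absurd rfl hef
  have h1 : 1 ≤ mim (cutGraph G σ i) := by
    have := le_mim hmatch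
    simpa using this
  exact le_trans h1 (mim_le_mw (by omega) (σ b).is_lt)

/-- If `C₁, C₂, C₃` are connected induced subgraphs of `G` with pairwise distance at least
two, `k` is the minimum of their linear MIM-widths, and each pair of them is joined by a
path avoiding the closed neighborhood of the third, then `lmw G ≥ k + 1`. -/
theorem three_parts_lemma {V : Type*} [Fintype V] (G : SimpleGraph V)
    (C₁ C₂ C₃ : Set V) (k : ℕ)
    (hc₁ : (G.induce C₁).Connected) (hc₂ : (G.induce C₂).Connected)
    (hc₃ : (G.induce C₃).Connected)
    (hd₁₂ : ∀ u ∈ C₁, ∀ v ∈ C₂, 2 ≤ G.edist u v)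
    (hd₁₃ : ∀ u ∈ C₁, ∀ v ∈ C₃, 2 ≤ G.edist u v)
    (hd₂₃ : ∀ u ∈ C₂, ∀ v ∈ C₃, 2 ≤ G.edist u v)
    (hk : k = min (lmw (G.induce C₁)) (min (lmw (G.induce C₂)) (lmw (G.induce C₃))))
    (hp₁₂ : ∃ a ∈ C₁, ∃ b ∈ C₂, ∃ w : G.Walk a b, w.IsPath ∧
      ∀ x ∈ w.support, x ∉ closedNbhd G C₃)
    (hp₁₃ : ∃ a ∈ C₁, ∃ b ∈ C₃, ∃ w : G.Walk a b, w.IsPath ∧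
      ∀ x ∈ w.support, x ∉ closedNbhd G C₂)
    (hp₂₃ : ∃ a ∈ C₂, ∃ b ∈ C₃, ∃ w : G.Walk a b, w.IsPath ∧
      ∀ x ∈ w.support, x ∉ closedNbhd G C₁) :
    k + 1 ≤ lmw G := by
  have hd₂₁ : ∀ u ∈ C₂, ∀ v ∈ C₁, 2 ≤ G.edist u v := fun u hu v hv => by
    rw [SimpleGraph.edist_comm]; exact hd₁₂ v hv u hu
  have hd₃₁ : ∀ u ∈ C₃, ∀ v ∈ C₁, 2 ≤ G.edist u v := fun u hu v hv => by
    rw [SimpleGraph.edist_comm]; exact hd₁₃ v hv u hu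
  have hd₃₂ : ∀ u ∈ C₃, ∀ v ∈ C₂, 2 ≤ G.edist u v := fun u hu v hv => by
    rw [SimpleGraph.edist_comm]; exact hd₂₃ v hv u hu
  have n12 : ∀ u ∈ C₁, u ∉ closedNbhd G C₂ := fun u hu => not_mem_closedNbhd hd₁₂ hu
  have n13 : ∀ u ∈ C₁, u ∉ closedNbhd G C₃ := fun u hu => not_mem_closedNbhd hd₁₃ hu
  have n21 : ∀ u ∈ C₂, u ∉ closedNbhd G C₁ := fun u hu => not_mem_closedNbhd hd₂₁ hu
  have n23 : ∀ u ∈ C₂, u ∉ closedNbhd G C₃ := fun u hu => not_mem_closedNbhd hd₂₃ hu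
  have n31 : ∀ u ∈ C₃, u ∉ closedNbhd G C₁ := fun u hu => not_mem_closedNbhd hd₃₁ hu
  have n32 : ∀ u ∈ C₃, u ∉ closedNbhd G C₂ := fun u hu => not_mem_closedNbhd hd₃₂ hu
  have p12 : ∃ a ∈ C₁, ∃ b ∈ C₂, ∃ w : G.Walk a b, ∀ x ∈ w.support, x ∉ closedNbhd G C₃ := by
    obtain ⟨a, ha, b, hb, w, -, h⟩ := hp₁₂; exact ⟨a, ha, b, hb, w, h⟩
  have p13 : ∃ a ∈ C₁, ∃ b ∈ C₃, ∃ w : G.Walk a b, ∀ x ∈ w.support, x ∉ closedNbhd G C₂ := by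
    obtain ⟨a, ha, b, hb, w, -, h⟩ := hp₁₃; exact ⟨a, ha, b, hb, w, h⟩
  have p23 : ∃ a ∈ C₂, ∃ b ∈ C₃, ∃ w : G.Walk a b, ∀ x ∈ w.support, x ∉ closedNbhd G C₁ := by
    obtain ⟨a, ha, b, hb, w, -, h⟩ := hp₂₃; exact ⟨a, ha, b, hb, w, h⟩
  apply le_lmw
  intro σ
  by_cases hk0 : k = 0
  · subst hk0
    obtain ⟨a, ha, b, hb, w, hsup⟩ := p12
    have hne : σ a ≠ σ b := by
      intro h
      have hab : a = b := σ.injective h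
      have h2 := hd₁₂ a ha b hb
      rw [hab, SimpleGraph.edist_self] at h2
      norm_num at h2
    rcases lt_or_gt_of_ne hne with h | h
    · exact one_le_mw σ w (Fin.lt_def.mp h)
    · exact one_le_mw σ w.reverse (Fin.lt_def.mp h)
  · have hk1 : 1 ≤ k := by omega
    have hle1 : k ≤ lmw (G.induce C₁) := by rw [hk]; exact min_le_left _ _
    have hle2 : k ≤ lmw (G.induce C₂) := by
      rw [hk]; exact le_trans (min_le_right _ _) (min_le_left _ _)
    have hle3 : k ≤ lmw (G.induce C₃) := by
      rw [hk]; exact le_trans (min_le_right _ _) (min_le_right _ _)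
    obtain ⟨i₁, hi₁1, hi₁n, ⟨a₁, ha₁s, ha₁⟩, ⟨b₁, hb₁s, hb₁⟩, M₁, hM₁, hM₁k, hM₁s⟩ :=
      extract σ C₁ hk1 hle1
    obtain ⟨i₂, hi₂1, hi₂n, ⟨a₂, ha₂s, ha₂⟩, ⟨b₂, hb₂s, hb₂⟩, M₂, hM₂, hM₂k, hM₂s⟩ :=
      extract σ C₂ hk1 hle2
    obtain ⟨i₃, hi₃1, hi₃n, ⟨a₃, ha₃s, ha₃⟩, ⟨b₃, hb₃s, hb₃⟩, M₃, hM₃, hM₃k, hM₃s⟩ :=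
      extract σ C₃ hk1 hle3
    rcases le_total i₁ i₂ with h12 | h21
    · rcases le_total i₂ i₃ with h23 | h32
      · -- i₁ ≤ i₂ ≤ i₃ : middle is i₂, B = C₂, A = C₁, C = C₃
        exact core σ hi₂1 hi₂n hM₂ hM₂k hM₂s hc₁ hc₃ n12 n32
          ⟨a₁, ha₁s, lt_of_lt_of_le ha₁ h12⟩ ⟨b₃, hb₃s, le_trans h23 hb₃⟩ p13
      · rcases le_total i₁ i₃ with h13 | h31
        · -- i₁ ≤ i₃ ≤ i₂ : middle is i₃, B = C₃, A = C₁, C = C₂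
          exact core σ hi₃1 hi₃n hM₃ hM₃k hM₃s hc₁ hc₂ n13 n23
            ⟨a₁, ha₁s, lt_of_lt_of_le ha₁ h13⟩ ⟨b₂, hb₂s, le_trans h32 hb₂⟩ p12
        · -- i₃ ≤ i₁ ≤ i₂ : middle is i₁, B = C₁, A = C₃, C = C₂
          exact core σ hi₁1 hi₁n hM₁ hM₁k hM₁s hc₃ hc₂ n31 n21
            ⟨a₃, ha₃s, lt_of_lt_of_le ha₃ h31⟩ ⟨b₂, hb₂s, le_trans h12 hb₂⟩ (walk_symm p23)
    · rcases le_total i₁ i₃ with h13 | h31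
      · -- i₂ ≤ i₁ ≤ i₃ : middle is i₁, B = C₁, A = C₂, C = C₃
        exact core σ hi₁1 hi₁n hM₁ hM₁k hM₁s hc₂ hc₃ n21 n31
          ⟨a₂, ha₂s, lt_of_lt_of_le ha₂ h21⟩ ⟨b₃, hb₃s, le_trans h13 hb₃⟩ p23
      · rcases le_total i₂ i₃ with h23 | h32
        · -- i₂ ≤ i₃ ≤ i₁ : middle is i₃, B = C₃, A = C₂, C = C₁
          exact core σ hi₃1 hi₃n hM₃ hM₃k hM₃s hc₂ hc₁ n23 n13
            ⟨a₂, ha₂s, lt_of_lt_of_le ha₂ h23⟩ ⟨b₁, hb₁s, le_trans h31 hb₁⟩ (walk_symm p12)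
        · -- i₃ ≤ i₂ ≤ i₁ : middle is i₂, B = C₂, A = C₃, C = C₁
          exact core σ hi₂1 hi₂n hM₂ hM₂k hM₂s hc₃ hc₁ n32 n12
            ⟨a₃, ha₃s, lt_of_lt_of_le ha₃ h32⟩ ⟨b₁, hb₁s, le_trans h21 hb₁⟩ (walk_symm p13)

end LMW
end
end

section
/- Let G be a graph, σ a linear layout of G with mw(σ,G) ≤ k, and C a connected induced subgraph of G. Suppose there is an index i with 1 ≤ i < |V(G)| such that the bipartite cut graph G[Vᵢ, V̄ᵢ] contains an induced matching of size k all of whose edges have both endpoints at distance at least 2 in G from C. Then C lies entirely on one side of the cut: either every vertex x of C satisfies σ(x) ≤ i, or every vertex x of C satisfies σ(x) > i. -/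
open scoped Classical

noncomputable section

namespace LMW

variable {V : Type*} [Fintype V]

/-- Along a walk in the induced subgraph on `C` from a vertex on the low side of the cut
to a vertex on the high side, there is an edge of `G` inside `C` crossing the cut. -/
lemma exists_crossing_edge {V : Type*} [Fintype V] (G : SimpleGraph V)
    (σ : V ≃ Fin (Fintype.card V)) (i : ℕ) (C : Set V) :
    ∀ {a b : ↥C} (_ : (G.induce C).Walk a b),
      (σ (a : V) : ℕ) < i → i ≤ (σ (b : V) : ℕ) →
      ∃ u v : V, u ∈ C ∧ v ∈ C ∧ G.Adj u v ∧ (σ u : ℕ) < i ∧ i ≤ (σ v : ℕ) := by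
  intro a b w
  induction w with
  | nil => intro h1 h2; omega
  | @cons a c b hac p ih =>
    intro h1 h2
    by_cases hc : (σ (c : V) : ℕ) < i
    · exact ih hc h2
    · exact ⟨a, c, a.2, c.2, hac, h1, le_of_not_gt hc⟩

/-- Suppose `mw G σ ≤ k`, `C` is a connected induced subgraph of `G`, and some cut
`(Vᵢ, V̄ᵢ)` of the layout admits an induced matching of size `k` all of whose endpoints are
at distance at least `2` in `G` from `C`.  Then `C` lies entirely on one side of the cut. -/
theorem connected_subgraph_one_side {V : Type*} [Fintype V] (G : SimpleGraph V)
    (σ : V ≃ Fin (Fintype.card V)) (k : ℕ) (hσ : mw G σ ≤ k)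
    (C : Set V) (hC : (G.induce C).Connected)
    (i : ℕ) (hi₁ : 1 ≤ i) (hi₂ : i < Fintype.card V)
    (M : Finset (Sym2 V)) (hM : IsInducedMatching (cutGraph G σ i) M) (hMcard : M.card = k)
    (hfar : ∀ e ∈ M, ∀ u ∈ e, ∀ w ∈ C, 2 ≤ G.edist u w) :
    (∀ x ∈ C, (σ x : ℕ) < i) ∨ (∀ x ∈ C, i ≤ (σ x : ℕ)) := by
  by_contra hcon
  push_neg at hcon
  obtain ⟨⟨x, hxC, hx⟩, ⟨y, hyC, hy⟩⟩ := hcon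
  -- there is a walk in the induced graph from y (low side) to x (high side)
  obtain ⟨w⟩ := hC.preconnected ⟨y, hyC⟩ ⟨x, hxC⟩
  obtain ⟨u, v, huC, hvC, huv, hu, hv⟩ :=
    exists_crossing_edge G σ i C w hy hx
  -- the crossing edge
  set e₀ : Sym2 V := s(u, v) with he₀
  have he₀M : e₀ ∉ M := by
    intro hmem
    have := hfar e₀ hmem u (by simp [he₀]) u huC
    simp [SimpleGraph.edist_self] at this
  -- key facts about endpoints of M vs vertices of C
  have hkey : ∀ f ∈ M, ∀ p, p ∈ f → ∀ q ∈ C, p ≠ q ∧ ¬ G.Adj p q := by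
    intro f hf p hp q hq
    have h2 := hfar f hf p hp q hq
    constructor
    · rintro rfl; simp [SimpleGraph.edist_self] at h2
    · intro hadj
      have := SimpleGraph.edist_eq_one_iff_adj.mpr hadj
      rw [this] at h2
      norm_num at h2
  have hmemC : ∀ p : V, p ∈ e₀ → p ∈ C := by
    intro p hp
    rw [he₀, Sym2.mem_iff] at hp
    rcases hp with rfl | rfl
    · exact huC
    · exact hvC
  -- insert e₀ into M : still an induced matching
  have hM' : IsInducedMatching (cutGraph G σ i) (insert e₀ M) := by
    constructor
    · intro e he
      simp only [Finset.coe_insert, Set.mem_insert_iff] at he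
      rcases he with rfl | he
      · exact ⟨huv, Or.inl ⟨hu, hv⟩⟩
      · exact hM.1 he
    · intro e he f hf hef p hp q hq
      simp only [Finset.mem_insert] at he hf
      rcases he with rfl | he
      · rcases hf with rfl | hf
        · exact absurd rfl hef
        · have := hkey f hf q hq p (hmemC p hp)
          exact ⟨Ne.symm this.1, fun h => this.2 (h.symm.1)⟩
      · rcases hf with rfl | hf
        · have := hkey e he p hp q (hmemC q hq)
          exact ⟨this.1, fun h => this.2 h.1⟩
        · exact hM.2 e he f hf hef p hp q hq
  have hcard' : (insert e₀ M).card = k + 1 := by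
    rw [Finset.card_insert_of_notMem he₀M, hMcard]
  -- hence mim of the cut graph is at least k+1
  have hbdd : BddAbove {n : ℕ | ∃ M : Finset (Sym2 V),
      IsInducedMatching (cutGraph G σ i) M ∧ M.card = n} := by
    refine ⟨Fintype.card (Sym2 V), ?_⟩
    rintro n ⟨N, -, rfl⟩
    exact Finset.card_le_univ N
  have hmim : k + 1 ≤ mim (cutGraph G σ i) :=
    le_csSup hbdd ⟨insert e₀ M, hM', hcard'⟩
  have hle : mim (cutGraph G σ i) ≤ mw G σ :=
    Finset.le_sup (f := fun j => mim (cutGraph G σ j))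
      (Finset.mem_Ico.mpr ⟨hi₁, hi₂⟩)
  omega

end LMW
end
end
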